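/- Let Ω be a bounded domain in ℂⁿ, φ ∈ L^∞(Ω), 0 ≤ p, q ≤ n, and ψ ∈ C(cl(Ω)). If the Toeplitz operator T^{p,q}_φ is compact on K²_{(p,q)}(Ω), then the Toeplitz operator T^{p,q}_{φψ} is compact on K²_{(p,q)}(Ω). -/

import Mathlib

open MeasureTheory Metric Complex Bornology
open scoped ENNReal NNReal ComplexConjugate

noncomputable section

/-- `ℂⁿ` as a Euclidean (Hermitian) space. -/
abbrev CE (n : ℕ) : Type := EuclideanSpace ℂ (Fin n)

instance (n : ℕ) : MeasurableSpace (CE n) := MeasurableSpace.comap WithLp.ofLp MeasurableSpace.pi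

instance (n : ℕ) : BorelSpace (CE n) := inferInstanceAs (BorelSpace (PiLp 2 fun _ : Fin n => ℂ))

/-- Lebesgue measure on `ℂⁿ`. -/
instance (n : ℕ) : MeasureSpace (CE n) := ⟨(Measure.pi fun _ : Fin n => (volume : Measure ℂ)).map (WithLp.toLp 2)⟩

/-- A function is plurisubharmonic on a set if it is upper semicontinuous there and
satisfies the sub-mean value inequality on circles in every complex line. -/
def PlurisubharmonicOn {n : ℕ} (u : CE n → ℝ) (s : Set (CE n)) : Prop :=
  UpperSemicontinuousOn u s ∧
    ∀ a b : CE n, ∀ R : ℝ, 0 < R →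
      (∀ t : ℂ, ‖t‖ ≤ R → a + t • b ∈ s) →
      u a ≤ (2 * Real.pi)⁻¹ *
        ∫ θ in (0:ℝ)..(2 * Real.pi), u (a + ((R : ℂ) * Complex.exp (θ * Complex.I)) • b)

/-- A domain `Ω ⊆ ℂⁿ` is pseudoconvex if `-log dist(·, bΩ)` is plurisubharmonic on `Ω`. -/
def Pseudoconvex {n : ℕ} (Ω : Set (CE n)) : Prop :=
  PlurisubharmonicOn (fun z => -Real.log (infDist z Ωᶜ)) Ω

/-- A bounded domain has Lipschitz boundary if near each boundary point, after choosing a unit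
direction `ν`, the domain is the strict subgraph of a Lipschitz function over the real
hyperplane orthogonal to `ν`. -/
def HasLipschitzBoundary {n : ℕ} (Ω : Set (CE n)) : Prop :=
  ∀ p ∈ frontier Ω, ∃ ν : CE n, ‖ν‖ = 1 ∧ ∃ ε > 0, ∃ (L : NNReal) (ψ : CE n → ℝ),
    LipschitzWith L ψ ∧
      ∀ x ∈ ball p ε, (x ∈ Ω ↔ (inner ℂ x ν : ℂ).re < ψ (x - ((inner ℂ x ν : ℂ).re • ν)))

/-- A Lipschitz defining function for `Ω`: a (globally) Lipschitz function with
`Ω = {ρ < 0}` which is comparable to the negative boundary distance on `Ω`. -/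
def IsLipschitzDefiningFunction {n : ℕ} (Ω : Set (CE n)) (ρ : CE n → ℝ) : Prop :=
  (∃ L : NNReal, LipschitzWith L ρ) ∧ Ω = {z | ρ z < 0} ∧
    ∃ c C : ℝ, 0 < c ∧ 0 < C ∧
      ∀ z ∈ Ω, c * infDist z Ωᶜ ≤ -ρ z ∧ -ρ z ≤ C * infDist z Ωᶜ

/-- The measure `h dV` on `Ω ⊆ ℂⁿ`; `L²(Ω, h)` is `Lp ℂ 2` of this measure. -/
def wMeasure {n : ℕ} (Ω : Set (CE n)) (h : CE n → ℝ) : Measure (CE n) :=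
  (volume.restrict Ω).withDensity fun z => ENNReal.ofReal (h z)

/-- An element of `L²(Ω, h)` belongs to the Bergman space `A²(Ω, h)` if it has a
representative holomorphic on `Ω`. -/
def IsBergmanFun {n : ℕ} (Ω : Set (CE n)) (μ : Measure (CE n)) (f : Lp ℂ 2 μ) : Prop :=
  ∃ g : CE n → ℂ, DifferentiableOn ℂ g Ω ∧ ∀ᵐ z ∂μ, f z = g z

/-- The Bergman space `A²(Ω, h)` as a subset of `L²(Ω, h)`. -/
def bergmanSet {n : ℕ} (Ω : Set (CE n)) (μ : Measure (CE n)) : Set (Lp ℂ 2 μ) :=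
  {f | IsBergmanFun Ω μ f}

/-- `P` is the Bergman projection: the orthogonal projection of `L²(Ω, h)` onto `A²(Ω, h)`. -/
def IsBergmanProjection {n : ℕ} (Ω : Set (CE n)) (μ : Measure (CE n))
    (P : Lp ℂ 2 μ →L[ℂ] Lp ℂ 2 μ) : Prop :=
  (∀ f, IsBergmanFun Ω μ (P f)) ∧ (∀ f, IsBergmanFun Ω μ f → P f = f) ∧
    ∀ f g : Lp ℂ 2 μ, IsBergmanFun Ω μ g → (inner ℂ (f - P f) g : ℂ) = 0

/-- `M` is the operator of multiplication by `φ` on `L²(Ω, h)`. -/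
def IsMultiplicationOp {n : ℕ} (μ : Measure (CE n)) (φ : CE n → ℂ)
    (M : Lp ℂ 2 μ →L[ℂ] Lp ℂ 2 μ) : Prop :=
  ∀ f : Lp ℂ 2 μ, (M f : CE n → ℂ) =ᵐ[μ] fun z => φ z * f z

/-- A (bounded linear) map `T` is a compact operator on the subspace `A` if the image
of the unit ball of `A` is relatively compact. -/
def CompactOnSet {H K : Type*} [NormedAddCommGroup H] [NormedAddCommGroup K]
    (T : H → K) (A : Set H) : Prop :=
  IsCompact (closure (T '' (A ∩ Metric.closedBall 0 1)))

/-- The index set for (p,q)-forms: pairs of strictly increasing multi-indices, encoded as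
pairs of subsets of `{1,…,n}` of cardinalities `p` and `q`. -/
abbrev FormIdx (n p q : ℕ) : Type :=
  {s : Finset (Fin n) // s.card = p} × {s : Finset (Fin n) // s.card = q}

/-- The fiber of the bundle of (p,q)-forms: one complex coefficient for each pair of
increasing multi-indices. -/
abbrev FormSp (n p q : ℕ) : Type := EuclideanSpace ℂ (FormIdx n p q)

/-- The Wirtinger derivative `∂χ/∂z̄ⱼ = (∂χ/∂xⱼ + i ∂χ/∂yⱼ)/2` of a test function. -/
def wirtingerBar {n : ℕ} (j : Fin n) (χ : CE n → ℂ) (z : CE n) : ℂ :=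
  (fderiv ℝ χ z (EuclideanSpace.single j 1) +
    Complex.I * fderiv ℝ χ z (Complex.I • EuclideanSpace.single j 1)) / 2

/-- A locally integrable `(p,q)`-form with coefficients `f (J,K)` is `∂̄`-closed on `Ω` in the
sense of distributions: for every `p`-index `J`, every `(q+1)`-index `L` and every test
function `χ`, the weak-derivative identity expressing that the coefficient of
`dz_J ∧ dz̄_L` in `∂̄f` vanishes holds. -/
def DbarClosedOn {n p q : ℕ} (Ω : Set (CE n)) (f : CE n → FormIdx n p q → ℂ) : Prop :=
  ∀ (J : {s : Finset (Fin n) // s.card = p}) (L : Finset (Fin n)) (hL : L.card = q + 1),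
    ∀ χ : CE n → ℂ, ContDiff ℝ (⊤ : ℕ∞) χ → HasCompactSupport χ → tsupport χ ⊆ Ω →
      ∑ j ∈ L.attach,
        ((-1 : ℂ) ^ (L.filter fun i => i < j.1).card *
          ∫ z in Ω,
            f z (J, ⟨L.erase j.1, by simp [Finset.card_erase_of_mem j.2, hL]⟩) *
              wirtingerBar j.1 χ z) = 0

/-- `K²_{(p,q)}(Ω)`: the set of square-integrable `∂̄`-closed `(p,q)`-forms on `Ω`, as a
subset of the square-integrable `(p,q)`-forms `L²_{(p,q)}(Ω)`. -/
def ksqSet {n : ℕ} (p q : ℕ) (Ω : Set (CE n)) :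
    Set (Lp (FormSp n p q) 2 (volume.restrict Ω)) :=
  {f | DbarClosedOn Ω fun z idx => (f : CE n → FormSp n p q) z idx}

/-- `P` is the Bergman projection of `L²_{(p,q)}(Ω)` onto `K²_{(p,q)}(Ω)`. -/
def IsKsqProjection {n : ℕ} (p q : ℕ) (Ω : Set (CE n))
    (P : Lp (FormSp n p q) 2 (volume.restrict Ω) →L[ℂ]
      Lp (FormSp n p q) 2 (volume.restrict Ω)) : Prop :=
  (∀ f, P f ∈ ksqSet p q Ω) ∧ (∀ f ∈ ksqSet p q Ω, P f = f) ∧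
    ∀ f, ∀ g ∈ ksqSet p q Ω, (inner ℂ (f - P f) g : ℂ) = 0

/-- `M` is the operator of multiplication by the (scalar) symbol `φ` on `L²_{(p,q)}(Ω)`. -/
def IsFormMultiplicationOp {n : ℕ} (p q : ℕ) (μ : Measure (CE n)) (φ : CE n → ℂ)
    (M : Lp (FormSp n p q) 2 μ →L[ℂ] Lp (FormSp n p q) 2 μ) : Prop :=
  ∀ f : Lp (FormSp n p q) 2 μ,
    (M f : CE n → FormSp n p q) =ᵐ[μ] fun z => φ z • (f : CE n → FormSp n p q) z

set_option linter.unusedSectionVars false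
set_option maxHeartbeats 1000000

open scoped Pointwise

section Toolkit
variable {H : Type*} [NormedAddCommGroup H] [NormedSpace ℂ H]

theorem compactOnSet_congr {T T' : H → H} {A : Set H}
    (h : ∀ x ∈ A ∩ closedBall 0 1, T x = T' x) (hT : CompactOnSet T A) :
    CompactOnSet T' A := by
  unfold CompactOnSet at *
  rwa [← Set.image_congr h]

theorem compactOnSet_comp (B : H →L[ℂ] H) {T : H → H} {A : Set H}
    (hT : CompactOnSet T A) : CompactOnSet (fun x => B (T x)) A := by
  have h1 : IsCompact (B '' closure (T '' (A ∩ closedBall 0 1))) := hT.image B.continuous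
  refine h1.of_isClosed_subset isClosed_closure (closure_minimal ?_ h1.isClosed)
  rintro x ⟨y, hy, rfl⟩
  exact ⟨T y, subset_closure ⟨y, hy, rfl⟩, rfl⟩

theorem compactOnSet_add {T T' : H → H} {A : Set H} (hT : CompactOnSet T A)
    (hT' : CompactOnSet T' A) : CompactOnSet (fun x => T x + T' x) A := by
  have h1 : IsCompact (closure (T '' (A ∩ closedBall 0 1)) +
      closure (T' '' (A ∩ closedBall 0 1))) := hT.add hT'
  refine h1.of_isClosed_subset isClosed_closure (closure_minimal ?_ h1.isClosed)
  rintro x ⟨y, hy, rfl⟩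
  exact Set.add_mem_add (subset_closure ⟨y, hy, rfl⟩) (subset_closure ⟨y, hy, rfl⟩)

theorem compactOnSet_precomp {T : H →L[ℂ] H} {B : H → H} {A : Set H}
    (hA : ∀ (c : ℂ), ∀ x ∈ A, c • x ∈ A) {R : ℝ} (hR : 0 < R)
    (hB : ∀ x ∈ A ∩ closedBall 0 1, B x ∈ A ∧ ‖B x‖ ≤ R)
    (hT : CompactOnSet (⇑T) A) : CompactOnSet (fun x => T (B x)) A := by
  have hC : IsCompact ((fun v => (R : ℂ) • v) '' closure (⇑T '' (A ∩ closedBall 0 1))) :=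
    hT.image (continuous_const_smul _)
  refine hC.of_isClosed_subset isClosed_closure (closure_minimal ?_ hC.isClosed)
  rintro x ⟨y, hy, rfl⟩
  obtain ⟨hBA, hBn⟩ := hB y hy
  have hw : (R : ℂ)⁻¹ • B y ∈ A ∩ closedBall 0 1 := by
    refine ⟨hA _ _ hBA, ?_⟩
    rw [mem_closedBall, dist_zero_right, norm_smul]
    have : ‖((R : ℂ))⁻¹‖ = R⁻¹ := by
      rw [norm_inv, Complex.norm_real, Real.norm_of_nonneg hR.le]
    rw [this]
    rw [inv_mul_le_iff₀ hR, mul_one]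
    exact hBn
  refine ⟨T ((R : ℂ)⁻¹ • B y), subset_closure ⟨_, hw, rfl⟩, ?_⟩
  show (R : ℂ) • T ((R : ℂ)⁻¹ • B y) = T (B y)
  rw [← T.map_smul, smul_smul]
  have : (R : ℂ) * (R : ℂ)⁻¹ = 1 := by
    rw [mul_inv_cancel₀]
    exact_mod_cast hR.ne'
  rw [this, one_smul]

theorem compactOnSet_approx [CompleteSpace H] {T : H → H} {A : Set H}
    (h : ∀ ε : ℝ, 0 < ε → ∃ T' : H → H, CompactOnSet T' A ∧
      ∀ x ∈ A ∩ closedBall 0 1, ‖T x - T' x‖ ≤ ε) : CompactOnSet T A := by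
  refine TotallyBounded.isCompact_of_isClosed (TotallyBounded.closure ?_) isClosed_closure
  rw [Metric.totallyBounded_iff]
  intro ε hε
  obtain ⟨T', hc, hb⟩ := h (ε / 3) (by positivity)
  have h2 := hc.totallyBounded
  rw [Metric.totallyBounded_iff] at h2
  obtain ⟨t, tfin, ht⟩ := h2 (ε / 3) (by positivity)
  refine ⟨t, tfin, ?_⟩
  rintro x ⟨y, hy, rfl⟩
  have h1 : T' y ∈ closure (T' '' (A ∩ closedBall 0 1)) := subset_closure ⟨y, hy, rfl⟩
  obtain ⟨z, hz, hzy⟩ := Set.mem_iUnion₂.mp (ht h1)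
  refine Set.mem_iUnion₂.mpr ⟨z, hz, ?_⟩
  rw [mem_ball] at *
  calc dist (T y) z ≤ dist (T y) (T' y) + dist (T' y) z := dist_triangle _ _ _
    _ < ε := by
        rw [dist_eq_norm]
        have := hb y hy
        linarith

end Toolkit

section MulOp
variable {α : Type*} [MeasurableSpace α] {μ : Measure α} {E : Type*}
  [NormedAddCommGroup E] [NormedSpace ℂ E]

/-- Multiplication by a bounded scalar function, as a continuous linear map on `L²`. -/
def mulOp (μ : Measure α) (E : Type*) [NormedAddCommGroup E] [NormedSpace ℂ E]
    (c : α → ℂ) : Lp E 2 μ →L[ℂ] Lp E 2 μ := by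
  classical
  exact if hc : MemLp c ⊤ μ then
    LinearMap.mkContinuous
      { toFun := fun f => ((Lp.memLp f).smul (r := 2) hc).toLp (c • ⇑f)
        map_add' := by
          intro f g
          apply Lp.ext
          filter_upwards [MemLp.coeFn_toLp (((Lp.memLp f).smul (r := 2) hc)),
            MemLp.coeFn_toLp (((Lp.memLp g).smul (r := 2) hc)),
            MemLp.coeFn_toLp (((Lp.memLp (f + g)).smul (r := 2) hc)),
            Lp.coeFn_add f g,
            Lp.coeFn_add (((Lp.memLp f).smul (r := 2) hc).toLp (c • ⇑f))
              (((Lp.memLp g).smul (r := 2) hc).toLp (c • ⇑g))] with z h1 h2 h3 h4 h5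
          rw [h3, h5]
          simp only [Pi.add_apply, Pi.smul_apply, Pi.smul_apply']
          rw [h1, h2]
          simp only [Pi.smul_apply, Pi.smul_apply']
          rw [h4]
          simp [smul_add]
        map_smul' := by
          intro a f
          apply Lp.ext
          filter_upwards [MemLp.coeFn_toLp (((Lp.memLp f).smul (r := 2) hc)),
            MemLp.coeFn_toLp (((Lp.memLp (a • f)).smul (r := 2) hc)),
            Lp.coeFn_smul a f,
            Lp.coeFn_smul a (((Lp.memLp f).smul (r := 2) hc).toLp (c • ⇑f))]
            with z h1 h2 h3 h4
          simp only [RingHom.id_apply]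
          rw [h2, h4]
          simp only [Pi.smul_apply, Pi.smul_apply']
          rw [h3]
          rw [h1]
          simp only [Pi.smul_apply, Pi.smul_apply']
          rw [smul_comm] }
      (eLpNorm c ⊤ μ).toReal
      (by
        intro f
        dsimp only [LinearMap.coe_mk, AddHom.coe_mk]
        rw [Lp.norm_toLp]
        have h1 : eLpNorm (c • ⇑f) 2 μ ≤ eLpNorm c ⊤ μ * eLpNorm f 2 μ :=
          eLpNorm_smul_le_eLpNorm_top_mul_eLpNorm 2 (Lp.aestronglyMeasurable f) c
        have h2 : eLpNorm c ⊤ μ * eLpNorm f 2 μ ≠ ⊤ :=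
          ENNReal.mul_ne_top hc.eLpNorm_ne_top (Lp.eLpNorm_ne_top f)
        calc (eLpNorm (c • ⇑f) 2 μ).toReal ≤ (eLpNorm c ⊤ μ * eLpNorm f 2 μ).toReal :=
              ENNReal.toReal_mono h2 h1
          _ = (eLpNorm c ⊤ μ).toReal * ‖f‖ := by rw [ENNReal.toReal_mul, Lp.norm_def])
  else 0

theorem mulOp_coeFn {c : α → ℂ} (hc : MemLp c ⊤ μ) (f : Lp E 2 μ) :
    ⇑(mulOp μ E c f) =ᵐ[μ] fun z => c z • f z := by
  rw [mulOp, dif_pos hc]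
  simp only [LinearMap.mkContinuous_apply, LinearMap.coe_mk, AddHom.coe_mk]
  exact MemLp.coeFn_toLp _

theorem norm_le_of_coeFn_eq_smul {c : α → ℂ} {C : ℝ} (hC : 0 ≤ C)
    (hbound : ∀ᵐ z ∂μ, ‖c z‖ ≤ C) (f : Lp E 2 μ) (x : Lp E 2 μ)
    (hx : ⇑x =ᵐ[μ] fun z => c z • f z) : ‖x‖ ≤ C * ‖f‖ := by
  rw [Lp.norm_def, eLpNorm_congr_ae hx]
  have h1 : eLpNorm (fun z => c z • f z) 2 μ ≤ eLpNorm (fun z => C • f z) 2 μ := by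
    apply eLpNorm_mono_ae
    filter_upwards [hbound] with z hz
    rw [norm_smul, norm_smul, Real.norm_of_nonneg hC]
    exact mul_le_mul_of_nonneg_right hz (norm_nonneg _)
  have h2 : eLpNorm (fun z => C • f z) 2 μ = ‖C‖₊ * eLpNorm f 2 μ := by
    rw [← enorm_eq_nnnorm, ← eLpNorm_const_smul C (⇑f) 2 μ]
    rfl
  have h3 : (‖C‖₊ : ℝ≥0∞) * eLpNorm f 2 μ ≠ ⊤ :=
    ENNReal.mul_ne_top ENNReal.coe_ne_top (Lp.eLpNorm_ne_top f)
  calc (eLpNorm (fun z => c z • f z) 2 μ).toReal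
      ≤ ((‖C‖₊ : ℝ≥0∞) * eLpNorm f 2 μ).toReal := ENNReal.toReal_mono h3 (h2 ▸ h1)
    _ = C * ‖f‖ := by
        rw [ENNReal.toReal_mul, Lp.norm_def]
        congr 1
        simp [Real.norm_of_nonneg hC]

theorem norm_mulOp_apply_le {c : α → ℂ} (hc : MemLp c ⊤ μ) {C : ℝ} (hC : 0 ≤ C)
    (hbound : ∀ᵐ z ∂μ, ‖c z‖ ≤ C) (f : Lp E 2 μ) : ‖mulOp μ E c f‖ ≤ C * ‖f‖ :=
  norm_le_of_coeFn_eq_smul hC hbound f _ (mulOp_coeFn hc f)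

end MulOp

section Dbar

variable {n p q : ℕ} {Ω : Set (CE n)}

theorem dbarClosedOn_congr {f g : CE n → FormIdx n p q → ℂ}
    (h : ∀ᵐ z ∂(volume.restrict Ω), ∀ idx, f z idx = g z idx)
    (hf : DbarClosedOn Ω f) : DbarClosedOn Ω g := by
  intro J L hL χ h1 h2 h3
  have key := hf J L hL χ h1 h2 h3
  rw [← key]
  apply Finset.sum_congr rfl
  intro j hj
  congr 1
  apply integral_congr_ae
  filter_upwards [h] with z hz
  rw [hz]

theorem dbarClosedOn_smul (c : ℂ) {f : CE n → FormIdx n p q → ℂ}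
    (hf : DbarClosedOn Ω f) : DbarClosedOn Ω (fun z idx => c * f z idx) := by
  intro J L hL χ h1 h2 h3
  have key := hf J L hL χ h1 h2 h3
  have step : ∀ j ∈ L.attach, ((-1 : ℂ) ^ (L.filter fun i => i < j.1).card *
        ∫ z in Ω, c * f z (J, ⟨L.erase j.1, by simp [Finset.card_erase_of_mem j.2, hL]⟩) *
          wirtingerBar j.1 χ z)
      = c * ((-1 : ℂ) ^ (L.filter fun i => i < j.1).card *
        ∫ z in Ω, f z (J, ⟨L.erase j.1, by simp [Finset.card_erase_of_mem j.2, hL]⟩) *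
          wirtingerBar j.1 χ z) := by
    intro j hj
    have : (∫ z in Ω, c * f z (J, ⟨L.erase j.1, by simp [Finset.card_erase_of_mem j.2, hL]⟩) *
          wirtingerBar j.1 χ z)
        = c * ∫ z in Ω, f z (J, ⟨L.erase j.1, by simp [Finset.card_erase_of_mem j.2, hL]⟩) *
          wirtingerBar j.1 χ z := by
      calc (∫ z in Ω, c * f z (J, ⟨L.erase j.1, by simp [Finset.card_erase_of_mem j.2, hL]⟩) *
              wirtingerBar j.1 χ z)
          = ∫ z in Ω, c • (f z (J, ⟨L.erase j.1, by simp [Finset.card_erase_of_mem j.2, hL]⟩) *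
              wirtingerBar j.1 χ z) := by
            apply integral_congr_ae
            apply Filter.Eventually.of_forall
            intro z
            simp only [smul_eq_mul]
            ring
        _ = c • ∫ z in Ω, f z (J, ⟨L.erase j.1, by simp [Finset.card_erase_of_mem j.2, hL]⟩) *
              wirtingerBar j.1 χ z := integral_smul c _
        _ = c * _ := rfl
    rw [this]
    ring
  rw [Finset.sum_congr rfl step, ← Finset.mul_sum, key, mul_zero]

theorem wirtingerBar_coord_mul (j0 k : Fin n) {χ : CE n → ℂ}
    (hχ : ContDiff ℝ (⊤ : ℕ∞) χ) (z : CE n) :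
    wirtingerBar k (fun w => w j0 * χ w) z = z j0 * wirtingerBar k χ z := by
  set L : CE n →L[ℝ] ℂ := (EuclideanSpace.proj j0 : CE n →L[ℂ] ℂ).restrictScalars ℝ with hLdef
  have hLd : DifferentiableAt ℝ (fun w : CE n => w j0) z := L.differentiableAt
  have hχd : DifferentiableAt ℝ χ z := (hχ.differentiable (by simp)).differentiableAt
  have hfd : fderiv ℝ (fun w : CE n => w j0 * χ w) z
      = z j0 • fderiv ℝ χ z + χ z • fderiv ℝ (fun w : CE n => w j0) z :=
    fderiv_mul hLd hχd
  have hfL : fderiv ℝ (fun w : CE n => w j0) z = L := L.fderiv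
  unfold wirtingerBar
  rw [hfd, hfL]
  have hI : ∀ v : CE n, L (Complex.I • v) = Complex.I * L v := by
    intro v
    show (EuclideanSpace.proj j0 : CE n →L[ℂ] ℂ) (Complex.I • v) = _
    rw [_root_.map_smul, smul_eq_mul]
    rfl
  simp only [ContinuousLinearMap.add_apply, ContinuousLinearMap.coe_smul', Pi.smul_apply,
    smul_eq_mul, hI]
  field_simp
  linear_combination (χ z * L (EuclideanSpace.single k 1)) * Complex.I_sq

theorem dbarClosedOn_coordMul (j0 : Fin n) {f : CE n → FormIdx n p q → ℂ}
    (hf : DbarClosedOn Ω f) : DbarClosedOn Ω (fun z idx => z j0 * f z idx) := by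
  intro J L hL χ h1 h2 h3
  have hχ'1 : ContDiff ℝ (⊤ : ℕ∞) (fun w : CE n => w j0 * χ w) :=
    (((EuclideanSpace.proj j0 : CE n →L[ℂ] ℂ).restrictScalars ℝ).contDiff).mul h1
  have hχ'2 : HasCompactSupport (fun w : CE n => w j0 * χ w) := by
    have := h2.mul_left (f := fun w : CE n => w j0)
    exact this
  have hχ'3 : tsupport (fun w : CE n => w j0 * χ w) ⊆ Ω := by
    refine le_trans ?_ h3
    exact tsupport_mul_subset_right
  have key := hf J L hL _ hχ'1 hχ'2 hχ'3
  rw [← key]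
  apply Finset.sum_congr rfl
  intro j hj
  congr 1
  apply integral_congr_ae
  apply Filter.Eventually.of_forall
  intro z
  simp only [wirtingerBar_coord_mul j0 j.1 h1]
  ring

theorem mem_ksq_of_coe {g : Lp (FormSp n p q) 2 (volume.restrict Ω)}
    {F : CE n → FormIdx n p q → ℂ} (hF : DbarClosedOn Ω F)
    (h : ∀ᵐ z ∂(volume.restrict Ω), ∀ idx, F z idx = (⇑g) z idx) : g ∈ ksqSet p q Ω :=
  dbarClosedOn_congr h hF

theorem ksq_smul (c : ℂ) {f : Lp (FormSp n p q) 2 (volume.restrict Ω)}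
    (hf : f ∈ ksqSet p q Ω) : c • f ∈ ksqSet p q Ω := by
  refine mem_ksq_of_coe (dbarClosedOn_smul c hf) ?_
  filter_upwards [Lp.coeFn_smul c f] with z hz idx
  rw [hz]
  simp

theorem coord_smul_mem_ksq (j0 : Fin n) {f x : Lp (FormSp n p q) 2 (volume.restrict Ω)}
    (hf : f ∈ ksqSet p q Ω)
    (hx : ⇑x =ᵐ[volume.restrict Ω] fun z => (z j0) • (⇑f) z) : x ∈ ksqSet p q Ω := by
  refine mem_ksq_of_coe (dbarClosedOn_coordMul j0 hf) ?_
  filter_upwards [hx] with z hz idx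
  rw [hz]
  simp

end Dbar
section MemLp

theorem coord_norm_le {n : ℕ} (z : CE n) (j : Fin n) : ‖z j‖ ≤ ‖z‖ := by
  rw [EuclideanSpace.norm_eq]
  have h1 : ‖z j‖ = Real.sqrt (‖z j‖ ^ 2) := (Real.sqrt_sq (norm_nonneg _)).symm
  rw [h1]
  apply Real.sqrt_le_sqrt
  exact Finset.single_le_sum (f := fun i => ‖z i‖ ^ 2) (fun i _ => sq_nonneg _)
    (Finset.mem_univ j)

theorem memℒp_top_restrict {n : ℕ} {Ω : Set (CE n)} (hbdd : IsBounded Ω)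
    (hmeas : MeasurableSet Ω) {v : CE n → ℂ} (hv : ContinuousOn v (closure Ω)) :
    MemLp v ⊤ (volume.restrict Ω) := by
  have hK : IsCompact (closure Ω) := hbdd.isCompact_closure
  obtain ⟨C, hC⟩ := hK.exists_bound_of_continuousOn hv
  refine memLp_top_of_bound ((hv.mono subset_closure).aestronglyMeasurable hmeas) C ?_
  filter_upwards [ae_restrict_mem hmeas] with z hz
  exact hC z (subset_closure hz)

theorem memℒp_top_mul {α : Type*} [MeasurableSpace α] {μ : Measure α} {a b : α → ℂ}
    (ha : MemLp a ⊤ μ) (hb : MemLp b ⊤ μ) : MemLp (fun z => a z * b z) ⊤ μ :=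
  hb.smul ha (p := ⊤) (q := ⊤) (r := ⊤)

theorem ae_bound_of_memℒp_top {α : Type*} [MeasurableSpace α] {μ : Measure α} {a : α → ℂ}
    (ha : MemLp a ⊤ μ) : ∀ᵐ z ∂μ, ‖a z‖ ≤ (eLpNorm a ⊤ μ).toReal := by
  have h1 : ∀ᵐ z ∂μ, (‖a z‖₊ : ℝ≥0∞) ≤ eLpNormEssSup a μ := ae_le_eLpNormEssSup
  filter_upwards [h1] with z hz
  have h2 : eLpNormEssSup a μ ≠ ⊤ := by
    rw [← eLpNorm_exponent_top]
    exact ha.eLpNorm_ne_top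
  have := ENNReal.toReal_mono h2 hz
  simpa [eLpNorm_exponent_top] using this

end MemLp

section Proj

variable {n p q : ℕ} {Ω : Set (CE n)}
  {P : Lp (FormSp n p q) 2 (volume.restrict Ω) →L[ℂ] Lp (FormSp n p q) 2 (volume.restrict Ω)}

theorem proj_inner_left (hP : IsKsqProjection p q Ω P)
    (x : Lp (FormSp n p q) 2 (volume.restrict Ω)) {u} (hu : u ∈ ksqSet p q Ω) :
    (inner ℂ (P x) u : ℂ) = inner ℂ x u := by
  have h := hP.2.2 x u hu
  rw [inner_sub_left, sub_eq_zero] at h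
  exact h.symm

theorem inner_proj_right (hP : IsKsqProjection p q Ω P)
    {a : Lp (FormSp n p q) 2 (volume.restrict Ω)} (ha : a ∈ ksqSet p q Ω) (w) :
    (inner ℂ a w : ℂ) = inner ℂ a (P w) := by
  have h := hP.2.2 w a ha
  have h2 : (inner ℂ a (w - P w) : ℂ) = 0 := by rw [← inner_conj_symm, h, map_zero]
  rw [inner_sub_right, sub_eq_zero] at h2
  exact h2

theorem ksq_ext (hP : IsKsqProjection p q Ω P)
    {a b : Lp (FormSp n p q) 2 (volume.restrict Ω)} (ha : a ∈ ksqSet p q Ω)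
    (hb : b ∈ ksqSet p q Ω)
    (h : ∀ u ∈ ksqSet p q Ω, (inner ℂ a u : ℂ) = inner ℂ b u) : a = b := by
  apply ext_inner_right ℂ
  intro w
  rw [inner_proj_right hP ha w, inner_proj_right hP hb w]
  exact h (P w) (hP.1 w)

end Proj
section Toeplitz

/-- Multiplication operator on `L²_{(p,q)}(Ω)`. -/
abbrev mOp {n : ℕ} (p q : ℕ) (Ω : Set (CE n)) (c : CE n → ℂ) :
    Lp (FormSp n p q) 2 (volume.restrict Ω) →L[ℂ] Lp (FormSp n p q) 2 (volume.restrict Ω) :=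
  mulOp (volume.restrict Ω) (FormSp n p q) c

variable {n p q : ℕ} {Ω : Set (CE n)}
  {P : Lp (FormSp n p q) 2 (volume.restrict Ω) →L[ℂ] Lp (FormSp n p q) 2 (volume.restrict Ω)}

theorem memℒp_coord (hbdd : IsBounded Ω) (hmeas : MeasurableSet Ω) (j0 : Fin n) :
    MemLp (fun z : CE n => (z j0 : ℂ)) ⊤ (volume.restrict Ω) :=
  memℒp_top_restrict hbdd hmeas ((EuclideanSpace.proj j0 : CE n →L[ℂ] ℂ).continuous.continuousOn)

theorem memℒp_coord_conj (hbdd : IsBounded Ω) (hmeas : MeasurableSet Ω) (j0 : Fin n) :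
    MemLp (fun z : CE n => (starRingEnd ℂ) (z j0)) ⊤ (volume.restrict Ω) := by
  refine memℒp_top_restrict hbdd hmeas ?_
  exact (continuous_conj.comp (EuclideanSpace.proj j0 : CE n →L[ℂ] ℂ).continuous).continuousOn

theorem toeplitz_holo (hbdd : IsBounded Ω) (hmeas : MeasurableSet Ω)
    (hP : IsKsqProjection p q Ω P) {g : CE n → ℂ} (hg : MemLp g ⊤ (volume.restrict Ω))
    (j0 : Fin n)
    (hT : CompactOnSet (fun f => P (mOp p q Ω g f)) (ksqSet p q Ω)) :
    CompactOnSet (fun f => P (mOp p q Ω (fun z => g z * z j0) f)) (ksqSet p q Ω) := by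
  obtain ⟨r, hr⟩ := hbdd.subset_closedBall 0
  set R : ℝ := max r 1 with hR
  have hR0 : 0 < R := lt_of_lt_of_le one_pos (le_max_right _ _)
  have hcoord := memℒp_coord hbdd hmeas j0
  have hgz : MemLp (fun z => g z * z j0) ⊤ (volume.restrict Ω) := memℒp_top_mul hg hcoord
  have hbnd : ∀ᵐ z ∂(volume.restrict Ω), ‖(z j0 : ℂ)‖ ≤ R := by
    filter_upwards [ae_restrict_mem hmeas] with z hz
    calc ‖(z j0 : ℂ)‖ ≤ ‖z‖ := coord_norm_le z j0
      _ ≤ r := by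
          have := hr hz
          rwa [mem_closedBall, dist_zero_right] at this
      _ ≤ R := le_max_left _ _
  have heq : ∀ f, P (mOp p q Ω (fun z => g z * z j0) f)
      = P (mOp p q Ω g (mOp p q Ω (fun z : CE n => (z j0 : ℂ)) f)) := by
    intro f
    congr 1
    apply Lp.ext
    filter_upwards [mulOp_coeFn hgz f,
      mulOp_coeFn hg (mOp p q Ω (fun z : CE n => (z j0 : ℂ)) f),
      mulOp_coeFn hcoord f] with z h1 h2 h3
    rw [h1, h2, h3, smul_smul]
  have hpre := compactOnSet_precomp (T := P.comp (mOp p q Ω g))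
    (B := ⇑(mOp p q Ω (fun z : CE n => (z j0 : ℂ)))) (A := ksqSet p q Ω)
    (fun c x hx => ksq_smul c hx) hR0 ?_ hT
  · refine compactOnSet_congr (fun f hf => ?_) hpre
    exact (heq f).symm
  · intro f hf
    constructor
    · exact coord_smul_mem_ksq j0 hf.1 (mulOp_coeFn hcoord f)
    · calc ‖mOp p q Ω (fun z : CE n => (z j0 : ℂ)) f‖ ≤ R * ‖f‖ :=
            norm_mulOp_apply_le hcoord hR0.le hbnd f
        _ ≤ R * 1 := by
            have : ‖f‖ ≤ 1 := by
              have := hf.2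
              rwa [mem_closedBall, dist_zero_right] at this
            exact mul_le_mul_of_nonneg_left this hR0.le
        _ = R := mul_one R

theorem toeplitz_antiholo_eq (hbdd : IsBounded Ω) (hmeas : MeasurableSet Ω)
    (hP : IsKsqProjection p q Ω P) {g : CE n → ℂ} (hg : MemLp g ⊤ (volume.restrict Ω))
    (j0 : Fin n) : ∀ f ∈ ksqSet p q Ω,
    P (mOp p q Ω (fun z => g z * (starRingEnd ℂ) (z j0)) f)
      = P (mOp p q Ω (fun z => (starRingEnd ℂ) (z j0)) (P (mOp p q Ω g f))) := by
  intro f hf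
  have hcoord := memℒp_coord hbdd hmeas j0
  have hconj := memℒp_coord_conj hbdd hmeas j0
  have hgc : MemLp (fun z => g z * (starRingEnd ℂ) (z j0)) ⊤ (volume.restrict Ω) :=
    memℒp_top_mul hg hconj
  apply ksq_ext hP (hP.1 _) (hP.1 _)
  intro u hu
  rw [proj_inner_left hP _ hu, proj_inner_left hP _ hu]
  set h := P (mOp p q Ω g f) with hh
  have hu' : mOp p q Ω (fun z : CE n => (z j0 : ℂ)) u ∈ ksqSet p q Ω :=
    coord_smul_mem_ksq j0 hu (mulOp_coeFn hcoord u)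
  have e1 : (inner ℂ (mOp p q Ω (fun z => (starRingEnd ℂ) (z j0)) h) u : ℂ)
      = inner ℂ h (mOp p q Ω (fun z : CE n => (z j0 : ℂ)) u) := by
    rw [L2.inner_def, L2.inner_def]
    apply integral_congr_ae
    filter_upwards [mulOp_coeFn hconj h, mulOp_coeFn hcoord u] with z h1 h2
    rw [h1, h2, inner_smul_left, inner_smul_right]
    simp
  have e2 : (inner ℂ h (mOp p q Ω (fun z : CE n => (z j0 : ℂ)) u) : ℂ)
      = inner ℂ (mOp p q Ω g f) (mOp p q Ω (fun z : CE n => (z j0 : ℂ)) u) :=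
    proj_inner_left hP _ hu'
  have e3 : (inner ℂ (mOp p q Ω g f) (mOp p q Ω (fun z : CE n => (z j0 : ℂ)) u) : ℂ)
      = inner ℂ (mOp p q Ω (fun z => g z * (starRingEnd ℂ) (z j0)) f) u := by
    rw [L2.inner_def, L2.inner_def]
    apply integral_congr_ae
    filter_upwards [mulOp_coeFn hg f, mulOp_coeFn hcoord u, mulOp_coeFn hgc f]
      with z h1 h2 h3
    rw [h1, h2, h3, inner_smul_left, inner_smul_right, inner_smul_left]
    simp only [map_mul, Complex.conj_conj]
    ring
  rw [e1, e2, e3]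

theorem toeplitz_antiholo (hbdd : IsBounded Ω) (hmeas : MeasurableSet Ω)
    (hP : IsKsqProjection p q Ω P) {g : CE n → ℂ} (hg : MemLp g ⊤ (volume.restrict Ω))
    (j0 : Fin n)
    (hT : CompactOnSet (fun f => P (mOp p q Ω g f)) (ksqSet p q Ω)) :
    CompactOnSet (fun f => P (mOp p q Ω (fun z => g z * (starRingEnd ℂ) (z j0)) f))
      (ksqSet p q Ω) := by
  have hcomp := compactOnSet_comp
    (B := P.comp (mOp p q Ω (fun z : CE n => (starRingEnd ℂ) (z j0)))) hT
  refine compactOnSet_congr (fun f hf => ?_) hcomp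
  exact (toeplitz_antiholo_eq hbdd hmeas hP hg j0 f hf.1).symm

theorem toeplitz_const (hP : IsKsqProjection p q Ω P) {g : CE n → ℂ}
    (hg : MemLp g ⊤ (volume.restrict Ω)) (c : ℂ)
    (hT : CompactOnSet (fun f => P (mOp p q Ω g f)) (ksqSet p q Ω)) :
    CompactOnSet (fun f => P (mOp p q Ω (fun z => g z * c) f)) (ksqSet p q Ω) := by
  have hc : MemLp (fun _ : CE n => c) ⊤ (volume.restrict Ω) :=
    memLp_top_of_bound aestronglyMeasurable_const ‖c‖
      (Filter.Eventually.of_forall fun _ => le_refl _)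
  have hgc : MemLp (fun z => g z * c) ⊤ (volume.restrict Ω) := memℒp_top_mul hg hc
  have heq : ∀ f, P (mOp p q Ω (fun z => g z * c) f) = c • P (mOp p q Ω g f) := by
    intro f
    rw [← _root_.map_smul]
    congr 1
    apply Lp.ext
    filter_upwards [mulOp_coeFn hgc f, mulOp_coeFn hg f,
      Lp.coeFn_smul c (mOp p q Ω g f)] with z h1 h2 h3
    rw [h1, h3, Pi.smul_apply, h2, smul_smul, mul_comm]
  have hcomp := compactOnSet_comp (B := c • ContinuousLinearMap.id ℂ _) hT
  refine compactOnSet_congr (fun f hf => ?_) hcomp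
  show c • P (mOp p q Ω g f) = _
  exact (heq f).symm

theorem toeplitz_add {g a b : CE n → ℂ}
    (hga : MemLp (fun z => g z * a z) ⊤ (volume.restrict Ω))
    (hgb : MemLp (fun z => g z * b z) ⊤ (volume.restrict Ω))
    (hT1 : CompactOnSet (fun f => P (mOp p q Ω (fun z => g z * a z) f)) (ksqSet p q Ω))
    (hT2 : CompactOnSet (fun f => P (mOp p q Ω (fun z => g z * b z) f)) (ksqSet p q Ω)) :
    CompactOnSet (fun f => P (mOp p q Ω (fun z => g z * (a z + b z)) f)) (ksqSet p q Ω) := by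
  have hgab : MemLp (fun z => g z * (a z + b z)) ⊤ (volume.restrict Ω) := by
    rw [show (fun z => g z * (a z + b z)) = fun z => g z * a z + g z * b z from
      funext fun z => mul_add _ _ _]
    exact hga.add hgb
  have heq : ∀ f, P (mOp p q Ω (fun z => g z * (a z + b z)) f)
      = P (mOp p q Ω (fun z => g z * a z) f) + P (mOp p q Ω (fun z => g z * b z) f) := by
    intro f
    rw [← map_add]
    congr 1
    apply Lp.ext
    filter_upwards [mulOp_coeFn hgab f, mulOp_coeFn hga f, mulOp_coeFn hgb f,
      Lp.coeFn_add (mOp p q Ω (fun z => g z * a z) f) (mOp p q Ω (fun z => g z * b z) f)]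
      with z h1 h2 h3 h4
    rw [h1, h4, Pi.add_apply, h2, h3, mul_add, add_smul]
  refine compactOnSet_congr (fun f hf => ?_) (compactOnSet_add hT1 hT2)
  exact (heq f).symm

end Toeplitz
section Strong

variable {n p q : ℕ} {Ω : Set (CE n)}
  {P : Lp (FormSp n p q) 2 (volume.restrict Ω) →L[ℂ] Lp (FormSp n p q) 2 (volume.restrict Ω)}

/-- The symbol `v` preserves compactness of Toeplitz operators under multiplication. -/
def StrongSym (p q : ℕ) (Ω : Set (CE n))
    (P : Lp (FormSp n p q) 2 (volume.restrict Ω) →L[ℂ] Lp (FormSp n p q) 2 (volume.restrict Ω))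
    (v : CE n → ℂ) : Prop :=
  ∀ g : CE n → ℂ, MemLp g ⊤ (volume.restrict Ω) →
    CompactOnSet (fun f => P (mOp p q Ω g f)) (ksqSet p q Ω) →
    CompactOnSet (fun f => P (mOp p q Ω (fun z => g z * v z) f)) (ksqSet p q Ω)

theorem strongSym_mul (hbdd : IsBounded Ω) (hmeas : MeasurableSet Ω) {a b : CE n → ℂ}
    (hacont : Continuous a) (Sa : StrongSym p q Ω P a) (Sb : StrongSym p q Ω P b) :
    StrongSym p q Ω P (fun z => a z * b z) := by
  intro g hg hT
  have h1 := Sa g hg hT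
  have h2 := Sb (fun z => g z * a z)
    (memℒp_top_mul hg (memℒp_top_restrict hbdd hmeas hacont.continuousOn)) h1
  have : (fun z => g z * a z * b z) = fun z => g z * (a z * b z) :=
    funext fun z => mul_assoc _ _ _
  rwa [this] at h2

theorem strongSym_add (hbdd : IsBounded Ω) (hmeas : MeasurableSet Ω) {a b : CE n → ℂ}
    (hacont : Continuous a) (hbcont : Continuous b)
    (Sa : StrongSym p q Ω P a) (Sb : StrongSym p q Ω P b) :
    StrongSym p q Ω P (fun z => a z + b z) := by
  intro g hg hT
  exact toeplitz_add (memℒp_top_mul hg (memℒp_top_restrict hbdd hmeas hacont.continuousOn))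
    (memℒp_top_mul hg (memℒp_top_restrict hbdd hmeas hbcont.continuousOn))
    (Sa g hg hT) (Sb g hg hT)

theorem strongSym_const (hP : IsKsqProjection p q Ω P) (r : ℂ) :
    StrongSym p q Ω P (fun _ => r) :=
  fun g hg hT => toeplitz_const hP hg r hT

/-- The coordinate functions restricted to the closure of `Ω`. -/
def coordCM (Ω : Set (CE n)) (j : Fin n) : C(↥(closure Ω), ℂ) :=
  ⟨fun x => (x : CE n) j, (EuclideanSpace.proj j : CE n →L[ℂ] ℂ).continuous.comp
    continuous_subtype_val⟩

theorem strong_of_mem_adjoin (hbdd : IsBounded Ω) (hmeas : MeasurableSet Ω)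
    (hP : IsKsqProjection p q Ω P) {u : C(↥(closure Ω), ℂ)}
    (hu : u ∈ StarAlgebra.adjoin ℂ (Set.range (coordCM Ω))) :
    ∃ v : CE n → ℂ, Continuous v ∧ (∀ x : ↥(closure Ω), v x = u x) ∧
      StrongSym p q Ω P v ∧ StrongSym p q Ω P (fun z => (starRingEnd ℂ) (v z)) := by
  induction hu using StarAlgebra.adjoin_induction with
  | mem x hx =>
      obtain ⟨j, rfl⟩ := hx
      refine ⟨fun z => z j, (EuclideanSpace.proj j : CE n →L[ℂ] ℂ).continuous,
        fun x => rfl, ?_, ?_⟩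
      · exact fun g hg hT => toeplitz_holo hbdd hmeas hP hg j hT
      · exact fun g hg hT => toeplitz_antiholo hbdd hmeas hP hg j hT
  | algebraMap r =>
      refine ⟨fun _ => r, continuous_const, fun x => rfl, strongSym_const hP r, ?_⟩
      exact strongSym_const hP _
  | add x y hx hy ihx ihy =>
      obtain ⟨vx, hvxc, hvxa, Sx, Sx'⟩ := ihx
      obtain ⟨vy, hvyc, hvya, Sy, Sy'⟩ := ihy
      refine ⟨fun z => vx z + vy z, hvxc.add hvyc, fun x' => by
        simp [hvxa x', hvya x'], strongSym_add hbdd hmeas hvxc hvyc Sx Sy, ?_⟩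
      have : (fun z => (starRingEnd ℂ) (vx z + vy z))
          = fun z => (starRingEnd ℂ) (vx z) + (starRingEnd ℂ) (vy z) :=
        funext fun z => map_add _ _ _
      rw [this]
      exact strongSym_add hbdd hmeas (continuous_conj.comp hvxc) (continuous_conj.comp hvyc)
        Sx' Sy'
  | mul x y hx hy ihx ihy =>
      obtain ⟨vx, hvxc, hvxa, Sx, Sx'⟩ := ihx
      obtain ⟨vy, hvyc, hvya, Sy, Sy'⟩ := ihy
      refine ⟨fun z => vx z * vy z, hvxc.mul hvyc, fun x' => by
        simp [hvxa x', hvya x'], strongSym_mul hbdd hmeas hvxc Sx Sy, ?_⟩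
      have : (fun z => (starRingEnd ℂ) (vx z * vy z))
          = fun z => (starRingEnd ℂ) (vx z) * (starRingEnd ℂ) (vy z) :=
        funext fun z => map_mul _ _ _
      rw [this]
      exact strongSym_mul hbdd hmeas (continuous_conj.comp hvxc) Sx' Sy'
  | star x hx ihx =>
      obtain ⟨vx, hvxc, hvxa, Sx, Sx'⟩ := ihx
      refine ⟨fun z => (starRingEnd ℂ) (vx z), continuous_conj.comp hvxc, fun x' => by
        simp [hvxa x'], Sx', ?_⟩
      have : (fun z => (starRingEnd ℂ) ((starRingEnd ℂ) (vx z))) = vx :=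
        funext fun z => Complex.conj_conj _
      rw [this]
      exact Sx

end Strong
section Main

variable {n p q : ℕ} {Ω : Set (CE n)}
  {P : Lp (FormSp n p q) 2 (volume.restrict Ω) →L[ℂ] Lp (FormSp n p q) 2 (volume.restrict Ω)}

theorem main_compact (hΩ : IsOpen Ω) (hbdd : IsBounded Ω) (hP : IsKsqProjection p q Ω P)
    {φ ψ : CE n → ℂ} (hφ : MemLp φ ⊤ (volume.restrict Ω))
    (hψ : ContinuousOn ψ (closure Ω))
    (hT : CompactOnSet (fun f => P (mOp p q Ω φ f)) (ksqSet p q Ω)) :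
    CompactOnSet (fun f => P (mOp p q Ω (fun z => φ z * ψ z) f)) (ksqSet p q Ω) := by
  have hmeas : MeasurableSet Ω := hΩ.measurableSet
  haveI : CompactSpace ↥(closure Ω) := isCompact_iff_compactSpace.mp hbdd.isCompact_closure
  set A := StarAlgebra.adjoin ℂ (Set.range (coordCM Ω)) with hA
  have hsep : A.SeparatesPoints := by
    intro x y hxy
    have hne : ∃ j : Fin n, (x : CE n) j ≠ (y : CE n) j := by
      by_contra hc
      push_neg at hc
      exact hxy (Subtype.ext (PiLp.ext hc))
    obtain ⟨j, hj⟩ := hne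
    exact ⟨⇑(coordCM Ω j), ⟨coordCM Ω j,
      StarAlgebra.subset_adjoin ℂ _ (Set.mem_range_self j), rfl⟩, hj⟩
  have htop : A.topologicalClosure = ⊤ :=
    ContinuousMap.starSubalgebra_topologicalClosure_eq_top_of_separatesPoints A hsep
  set ψC : C(↥(closure Ω), ℂ) := ⟨(closure Ω).restrict ψ, hψ.restrict⟩ with hψC
  have hmemcl : ψC ∈ closure (A : Set C(↥(closure Ω), ℂ)) := by
    rw [← StarSubalgebra.topologicalClosure_coe, htop]
    trivial
  apply compactOnSet_approx
  intro ε hε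
  set Cφ := (eLpNorm φ ⊤ (volume.restrict Ω)).toReal with hCφ
  have hCφ0 : (0:ℝ) ≤ Cφ := ENNReal.toReal_nonneg
  have hφbd := ae_bound_of_memℒp_top hφ
  set δ := ε / ((‖P‖ + 1) * (Cφ + 1)) with hδ
  have hδ0 : 0 < δ := by
    apply div_pos hε
    positivity
  obtain ⟨u, huA, hud⟩ := Metric.mem_closure_iff.mp hmemcl δ hδ0
  obtain ⟨v, hvcont, hvagree, hvS, -⟩ := strong_of_mem_adjoin hbdd hmeas hP huA
  refine ⟨fun f => P (mOp p q Ω (fun z => φ z * v z) f), hvS φ hφ hT, ?_⟩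
  intro f hf
  have hφψ : MemLp (fun z => φ z * ψ z) ⊤ (volume.restrict Ω) :=
    memℒp_top_mul hφ (memℒp_top_restrict hbdd hmeas hψ)
  have hφv : MemLp (fun z => φ z * v z) ⊤ (volume.restrict Ω) :=
    memℒp_top_mul hφ (memℒp_top_restrict hbdd hmeas hvcont.continuousOn)
  have hf1 : ‖f‖ ≤ 1 := by
    have := hf.2
    rwa [mem_closedBall, dist_zero_right] at this
  have hbound : ∀ᵐ z ∂(volume.restrict Ω), ‖φ z * ψ z - φ z * v z‖ ≤ Cφ * δ := by
    filter_upwards [hφbd, ae_restrict_mem hmeas] with z h1 h2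
    have hzX : z ∈ closure Ω := subset_closure h2
    have hz : ‖ψ z - v z‖ ≤ δ := by
      have e1 : ψ z - v z = (ψC - u) ⟨z, hzX⟩ := by
        simp only [ContinuousMap.sub_apply]
        rw [hvagree ⟨z, hzX⟩]
        rfl
      rw [e1]
      calc ‖(ψC - u) ⟨z, hzX⟩‖ ≤ ‖ψC - u‖ := ContinuousMap.norm_coe_le_norm _ _
        _ ≤ δ := by
            rw [← dist_eq_norm] at *
            exact le_of_lt hud
    calc ‖φ z * ψ z - φ z * v z‖ = ‖φ z‖ * ‖ψ z - v z‖ := by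
          rw [← mul_sub, norm_mul]
      _ ≤ Cφ * δ := mul_le_mul h1 hz (norm_nonneg _) hCφ0
  have hcoe : ⇑(mOp p q Ω (fun z => φ z * ψ z) f - mOp p q Ω (fun z => φ z * v z) f)
      =ᵐ[volume.restrict Ω] fun z => (φ z * ψ z - φ z * v z) • (⇑f) z := by
    filter_upwards [Lp.coeFn_sub (mOp p q Ω (fun z => φ z * ψ z) f)
      (mOp p q Ω (fun z => φ z * v z) f), mulOp_coeFn hφψ f, mulOp_coeFn hφv f]
      with z h1 h2 h3
    rw [h1, Pi.sub_apply, h2, h3, ← sub_smul]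
  have hdiff : ‖mOp p q Ω (fun z => φ z * ψ z) f - mOp p q Ω (fun z => φ z * v z) f‖
      ≤ (Cφ * δ) * ‖f‖ :=
    norm_le_of_coeFn_eq_smul (mul_nonneg hCφ0 hδ0.le) hbound f _ hcoe
  have hppos : (0:ℝ) < ‖P‖ + 1 := by linarith [norm_nonneg P]
  have hcpos : (0:ℝ) < Cφ + 1 := by linarith
  have h2 : ‖P‖ * ((Cφ * δ) * ‖f‖) ≤ (‖P‖ + 1) * ((Cφ + 1) * δ) := by
    have b1 : Cφ * δ * ‖f‖ ≤ Cφ * δ :=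
      mul_le_of_le_one_right (mul_nonneg hCφ0 hδ0.le) hf1
    have c1 : ‖P‖ * (Cφ * δ * ‖f‖) ≤ ‖P‖ * (Cφ * δ) :=
      mul_le_mul_of_nonneg_left b1 (norm_nonneg P)
    nlinarith [mul_nonneg (norm_nonneg P) hδ0.le, mul_nonneg hCφ0 hδ0.le, hδ0.le]
  have h3 : (‖P‖ + 1) * ((Cφ + 1) * δ) = ε := by
    have hne : (‖P‖ + 1) * (Cφ + 1) ≠ 0 := ne_of_gt (by nlinarith)
    calc (‖P‖ + 1) * ((Cφ + 1) * δ)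
        = ε / ((‖P‖ + 1) * (Cφ + 1)) * ((‖P‖ + 1) * (Cφ + 1)) := by rw [hδ]; ring
      _ = ε := div_mul_cancel₀ ε hne
  calc ‖P (mOp p q Ω (fun z => φ z * ψ z) f) - P (mOp p q Ω (fun z => φ z * v z) f)‖
      = ‖P (mOp p q Ω (fun z => φ z * ψ z) f - mOp p q Ω (fun z => φ z * v z) f)‖ := by
        rw [map_sub]
    _ ≤ ‖P‖ * ‖mOp p q Ω (fun z => φ z * ψ z) f - mOp p q Ω (fun z => φ z * v z) f‖ :=
        P.le_opNorm _
    _ ≤ ‖P‖ * ((Cφ * δ) * ‖f‖) := mul_le_mul_of_nonneg_left hdiff (norm_nonneg P)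
    _ ≤ ε := by linarith

end Main
theorem statement18 {n p q : ℕ} (hpn : p ≤ n) (hqn : q ≤ n)
    (Ω : Set (CE n)) (hΩ : IsOpen Ω) (hconn : IsConnected Ω) (hbdd : IsBounded Ω)
    (φ : CE n → ℂ) (hφ : MemLp φ ⊤ (volume.restrict Ω))
    (ψ : CE n → ℂ) (hψ : ContinuousOn ψ (closure Ω))
    (P M M' : Lp (FormSp n p q) 2 (volume.restrict Ω) →L[ℂ]
      Lp (FormSp n p q) 2 (volume.restrict Ω))
    (hP : IsKsqProjection p q Ω P)
    (hM : IsFormMultiplicationOp p q (volume.restrict Ω) φ M)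
    (hM' : IsFormMultiplicationOp p q (volume.restrict Ω) (fun z => φ z * ψ z) M')
    (hT : CompactOnSet (P ∘L M) (ksqSet p q Ω)) :
    CompactOnSet (P ∘L M') (ksqSet p q Ω) := by
  have hmeas : MeasurableSet Ω := hΩ.measurableSet
  have hφψ : MemLp (fun z => φ z * ψ z) ⊤ (volume.restrict Ω) :=
    memℒp_top_mul hφ (memℒp_top_restrict hbdd hmeas hψ)
  have hT0 : CompactOnSet (fun f => P (mOp p q Ω φ f)) (ksqSet p q Ω) := by
    refine compactOnSet_congr (fun f hf => ?_) hT
    show (P ∘L M) f = P (mOp p q Ω φ f)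
    simp only [ContinuousLinearMap.comp_apply]
    congr 1
    apply Lp.ext
    filter_upwards [hM f, mulOp_coeFn hφ f] with z h1 h2
    rw [h1, h2]
  have hmain := main_compact hΩ hbdd hP hφ hψ hT0
  refine compactOnSet_congr (fun f hf => ?_) hmain
  show P (mOp p q Ω (fun z => φ z * ψ z) f) = (P ∘L M') f
  simp only [ContinuousLinearMap.comp_apply]
  congr 1
  apply Lp.ext
  filter_upwards [hM' f, mulOp_coeFn hφψ f] with z h1 h2
  rw [h1, h2]
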